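/- For every x ≥ 0, there exists a unique z ≥ 0 such that z = 2·sin(x + z/2), provided x ∈ [0, π]; moreover this z lies in [0, 2]. -/
import Mathlib


open Real

lemma my_abs_sin_lt (t : ℝ) (ht : 0 < t) : |Real.sin t| < t := by
  rcases le_or_gt t 1 with h | h
  · have hsin : 0 ≤ Real.sin t :=
      Real.sin_nonneg_of_nonneg_of_le_pi ht.le (h.trans (by linarith [Real.pi_gt_three]))
    rw [abs_of_nonneg hsin]
    exact Real.sin_lt ht
  · calc |Real.sin t| ≤ 1 := abs_le.mpr ⟨Real.neg_one_le_sin t, Real.sin_le_one t⟩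
      _ < t := h

lemma chord_uniq (x z1 z2 : ℝ) (h1 : z1 = 2 * Real.sin (x + z1 / 2))
    (h2 : z2 = 2 * Real.sin (x + z2 / 2)) : z1 = z2 := by
  by_contra hne
  wlog hlt : z1 < z2 generalizing z1 z2
  · exact this z2 z1 h2 h1 (Ne.symm hne) (lt_of_le_of_ne (not_lt.mp hlt) (Ne.symm hne))
  have hss := Real.sin_sub_sin (x + z2 / 2) (x + z1 / 2)
  have e1 : (x + z2 / 2 - (x + z1 / 2)) / 2 = (z2 - z1) / 4 := by ring
  have e2 : (x + z2 / 2 + (x + z1 / 2)) / 2 = x + (z1 + z2) / 4 := by ring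
  rw [e1, e2] at hss
  have key : z2 - z1 = 4 * Real.sin ((z2 - z1) / 4) * Real.cos (x + (z1 + z2) / 4) := by
    linear_combination h2 - h1 + 2 * hss
  have hs : |Real.sin ((z2 - z1) / 4)| < (z2 - z1) / 4 := my_abs_sin_lt _ (by linarith)
  have hc : |Real.cos (x + (z1 + z2) / 4)| ≤ 1 :=
    abs_le.mpr ⟨Real.neg_one_le_cos _, Real.cos_le_one _⟩
  have h4 : z2 - z1 ≤ 4 * |Real.sin ((z2 - z1) / 4)| * |Real.cos (x + (z1 + z2) / 4)| := by
    have habs : |z2 - z1| = 4 * |Real.sin ((z2 - z1) / 4)| * |Real.cos (x + (z1 + z2) / 4)| := by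
      nth_rewrite 1 [key]
      rw [abs_mul, abs_mul]
      norm_num
    rw [← habs, abs_of_pos (by linarith : (0:ℝ) < z2 - z1)]
  nlinarith [abs_nonneg (Real.sin ((z2 - z1) / 4)), abs_nonneg (Real.cos (x + (z1 + z2) / 4))]

theorem exists_unique_chord_p (x : ℝ) (hx : x ∈ Set.Icc 0 π) :
    (∃! z : ℝ, 0 ≤ z ∧ z = 2 * Real.sin (x + z / 2)) ∧
      (∀ z : ℝ, 0 ≤ z → z = 2 * Real.sin (x + z / 2) → z ∈ Set.Icc (0:ℝ) 2) := by
  obtain ⟨hx0, hxpi⟩ := hx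
  have hsx : 0 ≤ Real.sin x := Real.sin_nonneg_of_nonneg_of_le_pi hx0 hxpi
  set f : ℝ → ℝ := fun z => z - 2 * Real.sin (x + z / 2) with hf
  have hcont : ContinuousOn f (Set.Icc 0 2) := by
    apply Continuous.continuousOn; fun_prop
  have h0 : f 0 ≤ 0 := by simp [hf]; linarith
  have h2 : 0 ≤ f 2 := by
    have := Real.sin_le_one (x + 1)
    simp [hf]; linarith
  have hmem : (0 : ℝ) ∈ Set.Icc (f 0) (f 2) := ⟨h0, h2⟩
  obtain ⟨z, hz, hz0⟩ := intermediate_value_Icc (by norm_num : (0:ℝ) ≤ 2) hcont hmem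
  have hzeq : z = 2 * Real.sin (x + z / 2) := by
    have : z - 2 * Real.sin (x + z / 2) = 0 := hz0
    linarith
  refine ⟨⟨z, ⟨hz.1, hzeq⟩, fun y hy => chord_uniq x y z hy.2 hzeq⟩, fun w hw hweq => ?_⟩
  refine ⟨hw, ?_⟩
  have := Real.sin_le_one (x + w / 2)
  linarith
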